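/- Let f : ℝ^d → ℝ ∪ {+∞} be a closed convex function with D := int(dom f) ≠ ∅, let j ∈ {1,…,d}, and let A be a closed set in ℝ^d containing range ∇f. Then Σ^j(∂f) ∩ D = Σ^j(∂̄f) ∩ D = Σ^j_A(∂f) ∩ D, and Σ^j(∂̄f) ⊂ Σ^j_A(∂f). -/

import Mathlib

open Filter Topology Set Pointwise
open scoped RealInnerProductSpace

noncomputable section

abbrev Euc (d : ℕ) := EuclideanSpace ℝ (Fin d)

/-- A proper lower-semicontinuous (closed) convex function with values in `ℝ ∪ {+∞}`. -/
def ClosedConvexFun {d : ℕ} (f : Euc d → EReal) : Prop :=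
  LowerSemicontinuous f ∧ (∀ x, f x ≠ ⊥) ∧ (∃ x, f x ≠ ⊤) ∧
    ∀ x y : Euc d, ∀ a b : ℝ, 0 ≤ a → 0 ≤ b → a + b = 1 →
      f (a • x + b • y) ≤ (a : EReal) * f x + (b : EReal) * f y

/-- Subdifferential of an `EReal`-valued function. -/
def subdiff {d : ℕ} (f : Euc d → EReal) (x : Euc d) : Set (Euc d) :=
  {y | ∀ z : Euc d, ((⟪z, y⟫ : ℝ) : EReal) + f x ≤ f (x + z)}

/-- Convex conjugate. -/
def fconj {d : ℕ} (f : Euc d → EReal) (y : Euc d) : EReal :=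
  ⨆ x : Euc d, ((⟪x, y⟫ : ℝ) : EReal) - f x

/-- The function `f_A(x) = sup_{y ∈ A} (⟨x,y⟩ - f*(y))`. -/
def restrSup {d : ℕ} (f : Euc d → EReal) (A : Set (Euc d)) (x : Euc d) : EReal :=
  ⨆ y ∈ A, (((⟪x, y⟫ : ℝ) : EReal) - fconj f y)

/-- `Arg_A(x) = argmax_{y ∈ A} (⟨x,y⟩ - f*(y))`. -/
def argMaxOn {d : ℕ} (f : Euc d → EReal) (A : Set (Euc d)) (x : Euc d) : Set (Euc d) :=
  {y ∈ A | ∀ z ∈ A, ((⟪x, z⟫ : ℝ) : EReal) - fconj f z ≤ ((⟪x, y⟫ : ℝ) : EReal) - fconj f y}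

/-- Linear growth: `|g x| ≤ K (1 + |x|)`. -/
def LinGrowth {k : ℕ} (g : Euc k → ℝ) : Prop :=
  ∃ K > 0, ∀ x, |g x| ≤ K * (1 + ‖x‖)

/-- `x^{-j}`: delete the `j`-th coordinate. -/
def dropCoord {d : ℕ} (j : Fin (d + 1)) (x : Euc (d + 1)) : Euc d :=
  WithLp.toLp 2 (fun i => x (j.succAbove i))

/-- The class `H^j_C`. -/
def MemH {d : ℕ} (j : Fin (d + 1)) (C : Set (Euc (d + 1))) (h : Euc (d + 1) → ℝ) : Prop :=
  ∃ g₁ g₂ : Euc d → ℝ, ConvexOn ℝ Set.univ g₁ ∧ ConvexOn ℝ Set.univ g₂ ∧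
    LinGrowth g₁ ∧ LinGrowth g₂ ∧
    (∀ x : Euc (d + 1), h x = x j + g₁ (dropCoord j x) - g₂ (dropCoord j x)) ∧
    ∀ x : Euc (d + 1), DifferentiableAt ℝ g₁ (dropCoord j x) →
      DifferentiableAt ℝ g₂ (dropCoord j x) → gradient h x ∈ C

/-- `θ^j(C) = {y / y^j : y ∈ C}`. -/
def theta {d : ℕ} (j : Fin d) (C : Set (Euc d)) : Set (Euc d) :=
  (fun y => (y j)⁻¹ • y) '' C

/-- `w` is a regular normal to `H` at `x`: `limsup_{H ∋ y → x} ⟨w, y-x⟩/|y-x| ≤ 0`. -/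
def RegNormal {d : ℕ} (H : Set (Euc d)) (x w : Euc d) : Prop :=
  ∀ ε > 0, ∃ δ > 0, ∀ y ∈ H, y ≠ x → ‖y - x‖ < δ → ⟪w, y - x⟫ ≤ ε * ‖y - x‖

/-- `w` is a normal vector to `H` at `x`. -/
def NormalVec {d : ℕ} (H : Set (Euc d)) (x w : Euc d) : Prop :=
  ∃ xs ws : ℕ → Euc d, (∀ n, xs n ∈ H ∧ RegNormal H (xs n) (ws n)) ∧
    Tendsto xs atTop (𝓝 x) ∧ Tendsto ws atTop (𝓝 w)

/-- Effective domain `{x | f x < ∞}`. -/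
def effDom {d : ℕ} (f : Euc d → EReal) : Set (Euc d) := {x | f x ≠ ⊤}

/-- Real part of an `EReal`-valued function. -/
def toRealFun {d : ℕ} (f : Euc d → EReal) : Euc d → ℝ := fun x => (f x).toReal

/-- Points of `int (dom f)` where `f` is differentiable. -/
def domGrad {d : ℕ} (f : Euc d → EReal) : Set (Euc d) :=
  {x | x ∈ interior (effDom f) ∧ DifferentiableAt ℝ (toRealFun f) x}

/-- `range ∇f`. -/
def gradRange {d : ℕ} (f : Euc d → EReal) : Set (Euc d) :=
  (fun x => gradient (toRealFun f) x) '' domGrad f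

/-- Clarke-type subdifferential `∂̄f(x)`. -/
def clarke {d : ℕ} (f : Euc d → EReal) (x : Euc d) : Set (Euc d) :=
  closure (convexHull ℝ
    {v | ∃ xs : ℕ → Euc d, (∀ n, xs n ∈ domGrad f) ∧ Tendsto xs atTop (𝓝 x) ∧
      Tendsto (fun n => gradient (toRealFun f) (xs n)) atTop (𝓝 v)})

/-- Singular set `Σ^j_A(Ψ)`. -/
def SigmaJ {d : ℕ} (Ψ : Euc d → Set (Euc d)) (j : Fin d) (A : Set (Euc d)) : Set (Euc d) :=
  {x | ∃ y₁ ∈ Ψ x ∩ A, ∃ y₂ ∈ Ψ x ∩ A, y₁ j ≠ y₂ j}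

/-- The bilinear form `S(x,y) = ∑ x^i S^{ij} y^j`. -/
def Sbil {d : ℕ} (S : Matrix (Fin d) (Fin d) ℝ) (x y : Euc d) : ℝ :=
  ∑ i, ∑ k, x i * S i k * y k

/-- Matrix acting on a vector. -/
def matVec {d : ℕ} (M : Matrix (Fin d) (Fin d) ℝ) (y : Euc d) : Euc d :=
  WithLp.toLp 2 (fun i => ∑ k, M i k * y k)

/-- Fitzpatrick function `ψ_G(x) = sup_{y ∈ G}(S(x,y) - S(y,y)/2)`. -/
def fitz {d : ℕ} (S : Matrix (Fin d) (Fin d) ℝ) (G : Set (Euc d)) (x : Euc d) : EReal :=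
  ⨆ y ∈ G, ((Sbil S x y - Sbil S y y / 2 : ℝ) : EReal)

/-- `S`-monotone set. -/
def SMonotone {d : ℕ} (S : Matrix (Fin d) (Fin d) ℝ) (G : Set (Euc d)) : Prop :=
  ∀ x ∈ G, ∀ y ∈ G, 0 ≤ Sbil S (x - y) (x - y)

/-- Projection `P_G(x) = argmin_{y ∈ G} S(x-y, x-y)`. -/
def proj {d : ℕ} (S : Matrix (Fin d) (Fin d) ℝ) (G : Set (Euc d)) (x : Euc d) : Set (Euc d) :=
  {y ∈ G | ∀ z ∈ G, Sbil S (x - y) (x - y) ≤ Sbil S (x - z) (x - z)}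

/-- `S`-regular normal vector. -/
def SRegNormal {d : ℕ} (S : Matrix (Fin d) (Fin d) ℝ) (H : Set (Euc d)) (x w : Euc d) : Prop :=
  ∀ ε > 0, ∃ δ > 0, ∀ y ∈ H, y ≠ x → ‖y - x‖ < δ → Sbil S w (y - x) ≤ ε * ‖y - x‖

/-- `S`-normal vector. -/
def SNormal {d : ℕ} (S : Matrix (Fin d) (Fin d) ℝ) (H : Set (Euc d)) (x w : Euc d) : Prop :=
  ∃ xs ws : ℕ → Euc d, (∀ n, xs n ∈ H ∧ SRegNormal S H (xs n) (ws n)) ∧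
    Tendsto xs atTop (𝓝 x) ∧ Tendsto ws atTop (𝓝 w)

/-- First-order singular set `Σ₁^j(P_G)`. -/
def Sigma1J {d : ℕ} (S : Matrix (Fin d) (Fin d) ℝ) (G : Set (Euc d)) (j : Fin d) :
    Set (Euc d) :=
  {x | ∃ y₁ ∈ proj S G x, ∃ y₂ ∈ proj S G x,
    0 < Sbil S (y₁ - y₂) (y₁ - y₂) ∧ y₁ j ≠ y₂ j}

/-- Zero-order singular set `Σ̄₀^j(P_G)`. -/
def Sigma0J {d : ℕ} (S : Matrix (Fin d) (Fin d) ℝ) (G : Set (Euc d)) (j : Fin d) :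
    Set (Euc d) :=
  {x | ∃ y₁ ∈ proj S G x, ∃ y₂ ∈ proj S G x,
    Sbil S (y₁ - y₂) (y₁ - y₂) = 0 ∧ y₁ j ≠ y₂ j}

/-- The canonical bilinear form of index `m` on `ℝ^m × ℝ^k`. -/
def Lam {m k : ℕ} (p q : Euc m × Euc k) : ℝ := ⟪p.1, q.1⟫ - ⟪p.2, q.2⟫


section Stmt9Aux

open Metric MeasureTheory

variable {d : ℕ} {f : Euc d → EReal}

lemma freal (hf : ClosedConvexFun f) {x : Euc d} (hx : f x ≠ ⊤) :
    f x = ((toRealFun f x : ℝ) : EReal) := (EReal.coe_toReal hx (hf.2.1 x)).symm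

lemma conv_real (hf : ClosedConvexFun f) {x y : Euc d} (hx : f x ≠ ⊤) (hy : f y ≠ ⊤)
    {a b : ℝ} (ha : 0 ≤ a) (hb : 0 ≤ b) (hab : a + b = 1) :
    f (a • x + b • y) ≠ ⊤ ∧
      toRealFun f (a • x + b • y) ≤ a * toRealFun f x + b * toRealFun f y := by
  have h := hf.2.2.2 x y a b ha hb hab
  rw [freal hf hx, freal hf hy] at h
  rw [show ((a : EReal) * ((toRealFun f x : ℝ) : EReal) + (b : EReal) * ((toRealFun f y : ℝ) : EReal))
      = (((a * toRealFun f x + b * toRealFun f y : ℝ)) : EReal) by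
    rw [← EReal.coe_mul, ← EReal.coe_mul, ← EReal.coe_add]] at h
  have htop : f (a • x + b • y) ≠ ⊤ := by
    intro hT; rw [hT] at h; exact (EReal.coe_lt_top _).not_ge h
  refine ⟨htop, ?_⟩
  rw [freal hf htop] at h
  exact_mod_cast h

lemma effDom_convex (hf : ClosedConvexFun f) : Convex ℝ (effDom f) := by
  intro x hx y hy a b ha hb hab
  exact (conv_real hf hx hy ha hb hab).1

lemma toRealFun_convexOn (hf : ClosedConvexFun f) : ConvexOn ℝ (effDom f) (toRealFun f) :=
  ⟨effDom_convex hf, fun x hx y hy a b ha hb hab => (conv_real hf hx hy ha hb hab).2⟩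

lemma hasDerivAt_line (g : Euc d → ℝ) (z u : Euc d) (hg : DifferentiableAt ℝ g z) :
    HasDerivAt (fun t : ℝ => g (z + t • u)) (⟪u, gradient g z⟫) 0 := by
  have hline : HasDerivAt (fun t : ℝ => z + t • u) u 0 := by
    simpa using ((hasDerivAt_id (0:ℝ)).smul_const u).const_add z
  have hgrad := hg.hasGradientAt
  rw [hasGradientAt_iff_hasFDerivAt] at hgrad
  rw [show z = z + (0:ℝ) • u by simp] at hgrad
  have := hgrad.comp_hasDerivAt (x := (0:ℝ)) hline
  simpa [InnerProductSpace.toDual_apply_apply, real_inner_comm, Function.comp_def, mul_comm] using this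

lemma norm_gradient_le_of_lipschitzOn {g : Euc d → ℝ} {z : Euc d} {K : NNReal}
    {s : Set (Euc d)} (hs : s ∈ 𝓝 z) (hl : LipschitzOnWith K g s) : ‖gradient g z‖ ≤ K := by
  have := norm_fderiv_le_of_lipschitzOn ℝ hs hl
  rwa [show ‖gradient g z‖ = ‖fderiv ℝ g z‖ from ?_]
  rw [gradient]
  exact LinearIsometryEquiv.norm_map _ _

lemma subgrad_real (hf : ClosedConvexFun f) {z : Euc d} (hz : z ∈ domGrad f)
    {u : Euc d} (hu : f (z + u) ≠ ⊤) :
    ⟪u, gradient (toRealFun f) z⟫ + toRealFun f z ≤ toRealFun f (z + u) := by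
  set g := toRealFun f with hg
  have hzE : f z ≠ ⊤ := interior_subset hz.1
  have hderiv := hasDerivAt_line g z u hz.2
  have hslope : ∀ t ∈ Ioc (0:ℝ) 1, slope (fun t : ℝ => g (z + t • u)) 0 t ≤ g (z + u) - g z := by
    intro t ht
    have hcomb := conv_real hf hzE hu (a := 1 - t) (b := t)
      (by linarith [ht.2]) (le_of_lt ht.1) (by ring)
    have hpt : (1 - t) • z + t • (z + u) = z + t • u := by
      rw [smul_add]; module
    rw [hpt] at hcomb
    have h2 := hcomb.2
    rw [slope_def_field]
    have : g (z + t • u) - g (z + (0:ℝ) • u) ≤ t * (g (z + u) - g z) := by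
      simp only [zero_smul, add_zero]
      nlinarith [h2]
    rw [sub_zero, div_le_iff₀ ht.1]
    nlinarith [this]
  have htend := (hasDerivAt_iff_tendsto_slope.1 hderiv).mono_left
    (nhdsWithin_mono (0:ℝ) (fun t (ht : t ∈ Ioi (0:ℝ)) => (ne_of_gt ht : t ≠ 0)))
  have hle : ⟪u, gradient g z⟫ ≤ g (z + u) - g z := by
    refine le_of_tendsto htend ?_
    filter_upwards [Ioc_mem_nhdsGT_of_mem (by constructor <;> norm_num : (0:ℝ) ∈ Ico (0:ℝ) 1)]
      with t ht using by
        have := hslope t ht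
        simpa using this
  have : g (z + (0:ℝ) • u) = g z := by simp
  linarith [hle]

lemma subgrad_of_gradient (hf : ClosedConvexFun f) {z : Euc d} (hz : z ∈ domGrad f) :
    gradient (toRealFun f) z ∈ subdiff f z := by
  intro u
  by_cases hu : f (z + u) = ⊤
  · rw [hu]; exact le_top
  · have h := subgrad_real hf hz hu
    rw [freal hf (interior_subset hz.1 : f z ≠ ⊤), freal hf hu, ← EReal.coe_add]
    exact_mod_cast h

lemma subgrad_real' (hf : ClosedConvexFun f) {z : Euc d} (hz : z ∈ domGrad f)
    {p : Euc d} (hp : f p ≠ ⊤) :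
    ⟪p - z, gradient (toRealFun f) z⟫ + toRealFun f z ≤ toRealFun f p := by
  have := subgrad_real hf hz (u := p - z) (by rwa [add_sub_cancel])
  rwa [add_sub_cancel] at this

lemma lim_subgrad (hf : ClosedConvexFun f) {x v : Euc d} {z : ℕ → Euc d}
    (hz : ∀ n, z n ∈ domGrad f) (hzx : Tendsto z atTop (𝓝 x))
    (hv : Tendsto (fun n => gradient (toRealFun f) (z n)) atTop (𝓝 v)) :
    v ∈ subdiff f x := by
  set g := toRealFun f with hgdef
  set w : ℕ → Euc d := fun n => gradient g (z n) with hwdef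
  have hzE : ∀ n, f (z n) ≠ ⊤ := fun n => interior_subset (hz n).1
  -- boundedness above of g (z n)
  obtain ⟨p₀, hp₀⟩ := hf.2.2.1
  have hb : ∀ n, g (z n) ≤ g p₀ - ⟪p₀ - z n, w n⟫ := by
    intro n; have := subgrad_real' hf (hz n) hp₀; linarith
  have hbtend : Tendsto (fun n => g p₀ - ⟪p₀ - z n, w n⟫) atTop
      (𝓝 (g p₀ - ⟪p₀ - x, v⟫)) :=
    tendsto_const_nhds.sub ((tendsto_const_nhds.sub hzx).inner hv)
  -- f x ≠ ⊤
  have hxtop : f x ≠ ⊤ := by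
    intro hT
    set B : ℝ := g p₀ - ⟪p₀ - x, v⟫ + 1 with hB
    have hlsc : ∀ᶠ n in atTop, ((B : ℝ) : EReal) < f (z n) :=
      hzx.eventually (hf.1 x ((B : ℝ) : EReal) (by show f x > ((B : ℝ) : EReal); rw [hT]; exact EReal.coe_lt_top B))
    have hup : ∀ᶠ n in atTop, g p₀ - ⟪p₀ - z n, w n⟫ < B :=
      hbtend.eventually (eventually_lt_nhds (by rw [hB]; linarith))
    obtain ⟨n, h1, h2⟩ := (hlsc.and hup).exists
    have : B < g (z n) := by
      rw [freal hf (hzE n)] at h1; exact_mod_cast h1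
    linarith [hb n]
  intro u
  by_cases hu : f (x + u) = ⊤
  · rw [hu]; exact le_top
  · have hmain : ∀ ε : ℝ, 0 < ε → ⟪u, v⟫ + (g x - ε) ≤ g (x + u) := by
      intro ε hε
      have hlsc : ∀ᶠ n in atTop, ((g x - ε : ℝ) : EReal) < f (z n) :=
        hzx.eventually (hf.1 x _ (by
          show f x > ((g x - ε : ℝ) : EReal); rw [freal hf hxtop]; exact_mod_cast (by linarith : g x - ε < g x)))
      have htend : Tendsto (fun n => ⟪x + u - z n, w n⟫ + (g x - ε)) atTop
          (𝓝 (⟪u, v⟫ + (g x - ε))) := by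
        have : Tendsto (fun n => (x + u) - z n) atTop (𝓝 u) := by
          have h0 : Tendsto (fun n => (x + u) - z n) atTop (𝓝 ((x + u) - x)) :=
            tendsto_const_nhds.sub hzx
          rwa [add_sub_cancel_left] at h0
        exact (this.inner hv).add_const _
      refine le_of_tendsto htend ?_
      filter_upwards [hlsc] with n h1
      have h2 : g x - ε < g (z n) := by
        rw [freal hf (hzE n)] at h1; exact_mod_cast h1
      have h3 := subgrad_real' hf (hz n) hu
      linarith
    have : ⟪u, v⟫ + g x ≤ g (x + u) := by
      by_contra hcon
      push_neg at hcon
      have := hmain ((⟪u, v⟫ + g x - g (x + u)) / 2) (by linarith)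
      linarith
    rw [freal hf hxtop, freal hf hu, ← EReal.coe_add]
    exact_mod_cast this

def Lset (f : Euc d → EReal) (x : Euc d) : Set (Euc d) :=
  {v | ∃ xs : ℕ → Euc d, (∀ n, xs n ∈ domGrad f) ∧ Tendsto xs atTop (𝓝 x) ∧
      Tendsto (fun n => gradient (toRealFun f) (xs n)) atTop (𝓝 v)}

lemma key (hf : ClosedConvexFun f) {x : Euc d} (hx : x ∈ interior (effDom f))
    {w : Euc d} (hw : w ∈ subdiff f x) (e : Euc d) :
    ∃ v ∈ Lset f x, ⟪e, w⟫ ≤ ⟪e, v⟫ := by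
  set g := toRealFun f with hgdef
  obtain ⟨R, hR0, hRsub⟩ := (Metric.nhds_basis_closedBall.mem_iff).1
    (isOpen_interior.mem_nhds hx)
  have hsubE : ball x R ⊆ effDom f :=
    (ball_subset_closedBall.trans hRsub).trans interior_subset
  have hconvball : ConvexOn ℝ (ball x R) g :=
    (toRealFun_convexOn hf).subset hsubE (convex_ball x R)
  have hcont : ContinuousOn g (closedBall x R) :=
    ((toRealFun_convexOn hf).continuousOn_interior).mono hRsub
  have hbd : Bornology.IsBounded (g '' ball x R) :=
    (((isCompact_closedBall x R).image_of_continuousOn hcont).isBounded).subset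
      (image_mono ball_subset_closedBall)
  obtain ⟨K, hK⟩ := hconvball.exists_lipschitzOnWith_of_isBounded (half_lt_self hR0) hbd
  set r : ℝ := R / 2 with hrdef
  have hr0 : 0 < r := half_pos hR0
  have hballD : ball x r ⊆ interior (effDom f) :=
    (ball_subset_closedBall.trans (closedBall_subset_closedBall (by linarith))).trans hRsub
  -- Rademacher & density
  have hae : ∀ᵐ y ∂(volume : MeasureTheory.Measure (Euc d)),
      y ∈ ball x r → DifferentiableWithinAt ℝ g (ball x r) y :=
    hK.ae_differentiableWithinAt_of_mem
  have hdense : Dense {y : Euc d | y ∈ ball x r → DifferentiableWithinAt ℝ g (ball x r) y} :=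
    MeasureTheory.Measure.dense_of_ae hae
  -- the approach sequence
  set c : ℝ := r / (2 * (‖e‖ + 1)) with hcdef
  have hc0 : 0 < c := by positivity
  set s : ℕ → ℝ := fun n => c * (1 / (n + 1)) with hsdef
  have hs0 : ∀ n, 0 < s n := fun n => by positivity
  have hsc : ∀ n, s n ≤ c := fun n => by
    have h1 : (1:ℝ)/((n:ℝ)+1) ≤ 1 := by
      rw [div_le_one (by positivity)]
      linarith [Nat.cast_nonneg (α := ℝ) n]
    rw [hsdef]
    nlinarith [hc0]
  have hstend : Tendsto s atTop (𝓝 0) := by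
    have := tendsto_one_div_add_atTop_nhds_zero_nat (𝕜 := ℝ)
    have h2 := this.const_mul c
    simpa [hsdef] using h2
  have hse : ∀ n, ‖(s n) • e‖ < r / 2 := by
    intro n
    rw [norm_smul, Real.norm_eq_abs, abs_of_pos (hs0 n)]
    calc s n * ‖e‖ ≤ c * ‖e‖ := by
          have := hsc n; nlinarith [norm_nonneg e, hs0 n]
      _ < r / 2 := by
          rw [hcdef]
          rw [div_mul_eq_mul_div, div_lt_div_iff₀ (by positivity) (by norm_num)]
          nlinarith [norm_nonneg e, hr0]
  set p : ℕ → Euc d := fun n => x + (s n) • e with hpdef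
  set δ : ℕ → ℝ := fun n => min ((s n) ^ 2) (r / 2) with hδdef
  have hδ0 : ∀ n, 0 < δ n := fun n => lt_min (by positivity) (by positivity)
  have hballsub : ∀ n, ball (p n) (δ n) ⊆ ball x r := by
    intro n y hy
    rw [mem_ball] at hy ⊢
    have h1 : dist y x ≤ dist y (p n) + dist (p n) x := dist_triangle _ _ _
    have h2 : dist (p n) x = ‖(s n) • e‖ := by
      rw [hpdef, dist_eq_norm]; simp
    have := hse n
    have := min_le_right ((s n)^2) (r/2)
    rw [h2] at h1
    calc dist y x ≤ dist y (p n) + ‖s n • e‖ := h1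
      _ < δ n + r / 2 := by linarith [hy, hse n]
      _ ≤ r / 2 + r / 2 := by linarith [min_le_right ((s n)^2) (r/2)]
      _ = r := by ring
  have hex : ∀ n, ∃ zz : Euc d, (zz ∈ ball (p n) (δ n)) ∧ zz ∈ domGrad f := by
    intro n
    obtain ⟨zz, hzz1, hzz2⟩ := hdense.exists_mem_open isOpen_ball
      ⟨p n, mem_ball_self (hδ0 n)⟩
    have hzball : zz ∈ ball x r := hballsub n hzz2
    refine ⟨zz, hzz2, hballD hzball, ?_⟩
    exact (hzz1 hzball).differentiableAt (isOpen_ball.mem_nhds hzball)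
  choose z hzball hzdom using hex
  have hzr : ∀ n, z n ∈ ball x r := fun n => hballsub n (hzball n)
  -- z n → x
  have hzdist : ∀ n, dist (z n) x ≤ (s n)^2 + s n * ‖e‖ := by
    intro n
    have h1 := dist_triangle (z n) (p n) x
    have h2 : dist (p n) x = ‖(s n) • e‖ := by rw [hpdef, dist_eq_norm]; simp
    have h3 : dist (z n) (p n) < δ n := hzball n
    have h4 : δ n ≤ (s n)^2 := min_le_left _ _
    have h5 : ‖(s n) • e‖ = s n * ‖e‖ := by
      rw [norm_smul, Real.norm_eq_abs, abs_of_pos (hs0 n)]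
    calc dist (z n) x ≤ dist (z n) (p n) + dist (p n) x := h1
      _ ≤ (s n)^2 + s n * ‖e‖ := by rw [h2, h5]; linarith
  have hzx : Tendsto z atTop (𝓝 x) := by
    rw [tendsto_iff_dist_tendsto_zero]
    refine squeeze_zero (fun n => dist_nonneg) hzdist ?_
    have : Tendsto (fun n => s n * s n + s n * ‖e‖) atTop (𝓝 (0 * 0 + 0 * ‖e‖)) :=
      ((hstend.mul hstend).add (hstend.mul_const ‖e‖))
    simpa [pow_two] using this
  -- gradients bounded
  set vs : ℕ → Euc d := fun n => gradient g (z n) with hvsdef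
  have hvsK : ∀ n, ‖vs n‖ ≤ (K : ℝ) := fun n =>
    norm_gradient_le_of_lipschitzOn (isOpen_ball.mem_nhds (hzr n)) hK
  obtain ⟨v, _, φ, hφ, hφtend⟩ := tendsto_subseq_of_bounded
    (Metric.isBounded_closedBall (x := (0 : Euc d)) (r := (K:ℝ)))
    (fun n => mem_closedBall_zero_iff.2 (hvsK n))
  refine ⟨v, ⟨z ∘ φ, fun n => hzdom (φ n), hzx.comp hφ.tendsto_atTop, hφtend⟩, ?_⟩
  -- monotonicity inequality per n
  have hxE : f x ≠ ⊤ := interior_subset hx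
  set B : ℝ := (K : ℝ) + ‖w‖ with hBdef
  have hB0 : 0 ≤ B := by positivity
  have hper : ∀ n, -(s n * B) ≤ ⟪e, vs n - w⟫ := by
    intro n
    have hznE : f (z n) ≠ ⊤ := interior_subset (hzdom n).1
    -- from hw
    have ha : ⟪z n - x, w⟫ + g x ≤ g (z n) := by
      have := hw (z n - x)
      rw [add_sub_cancel, freal hf hxE, freal hf hznE, ← EReal.coe_add] at this
      exact_mod_cast this
    have hb : ⟪x - z n, vs n⟫ + g (z n) ≤ g x := subgrad_real' hf (hzdom n) hxE
    have hmono : 0 ≤ ⟪z n - x, vs n - w⟫ := by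
      rw [inner_sub_right]
      have : ⟪x - z n, vs n⟫ = -⟪z n - x, vs n⟫ := by
        rw [show x - z n = -(z n - x) from (neg_sub _ _).symm, inner_neg_left]
      linarith [ha, hb, this ▸ hb]
    have hdecomp : z n - x = (s n) • e + (z n - p n) := by
      rw [hpdef]; module
    have hun : ‖z n - p n‖ ≤ (s n)^2 := by
      have := hzball n
      rw [mem_ball, dist_eq_norm] at this
      linarith [min_le_left ((s n)^2) (r/2), this]
    have hiu : ⟪z n - p n, vs n - w⟫ ≤ (s n)^2 * B := by
      calc ⟪z n - p n, vs n - w⟫ ≤ ‖z n - p n‖ * ‖vs n - w‖ := real_inner_le_norm _ _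
        _ ≤ (s n)^2 * B := by
            apply mul_le_mul hun ?_ (norm_nonneg _) (by positivity)
            calc ‖vs n - w‖ ≤ ‖vs n‖ + ‖w‖ := norm_sub_le _ _
              _ ≤ B := by linarith [hvsK n]
    have hexp : 0 ≤ s n * ⟪e, vs n - w⟫ + (s n)^2 * B := by
      have : ⟪z n - x, vs n - w⟫ = s n * ⟪e, vs n - w⟫ + ⟪z n - p n, vs n - w⟫ := by
        rw [hdecomp, inner_add_left, real_inner_smul_left]
      nlinarith [hmono, hiu]
    nlinarith [hexp, hs0 n]
  -- pass to the limit
  have htendL : Tendsto (fun k => ⟪e, vs (φ k) - w⟫) atTop (𝓝 ⟪e, v - w⟫) :=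
    tendsto_const_nhds.inner (hφtend.sub tendsto_const_nhds)
  have htendR : Tendsto (fun k => -(s (φ k) * B)) atTop (𝓝 0) := by
    have : Tendsto (fun k => s (φ k) * B) atTop (𝓝 (0 * B)) :=
      (hstend.comp hφ.tendsto_atTop).mul_const B
    simpa using this.neg
  have hfinal : (0:ℝ) ≤ ⟪e, v - w⟫ :=
    le_of_tendsto_of_tendsto' htendR htendL (fun k => hper (φ k))
  rw [inner_sub_right] at hfinal
  linarith


lemma Lset_subset_subdiff (hf : ClosedConvexFun f) (x : Euc d) : Lset f x ⊆ subdiff f x := by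
  rintro v ⟨xs, h1, h2, h3⟩; exact lim_subgrad hf h1 h2 h3

lemma Lset_subset_A {A : Set (Euc d)} (hA : IsClosed A) (hrange : gradRange f ⊆ A)
    (x : Euc d) : Lset f x ⊆ A := by
  rintro v ⟨xs, h1, h2, h3⟩
  exact hA.mem_of_tendsto h3 (Eventually.of_forall fun n => hrange ⟨xs n, h1 n, rfl⟩)

lemma clarke_eq_closure (x : Euc d) : clarke f x = closure (convexHull ℝ (Lset f x)) := rfl

lemma coordSet_closed (j : Fin d) (c : ℝ) : IsClosed {y : Euc d | y j = c} :=
  isClosed_eq (EuclideanSpace.proj (𝕜 := ℝ) j).continuous continuous_const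

lemma coordSet_convex (j : Fin d) (c : ℝ) : Convex ℝ {y : Euc d | y j = c} := by
  intro y hy z hz a b _ _ hab
  simp only [mem_setOf_eq] at hy hz ⊢
  have : (a • y + b • z) j = a * y j + b * z j := rfl
  rw [this, hy, hz, ← add_mul, hab, one_mul]

lemma mem_sigma_A_of_mem_sigma_clarke (hf : ClosedConvexFun f) {j : Fin d}
    {A : Set (Euc d)} (hA : IsClosed A) (hrange : gradRange f ⊆ A) {x : Euc d}
    (hx : x ∈ SigmaJ (clarke f) j Set.univ) : x ∈ SigmaJ (subdiff f) j A := by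
  obtain ⟨y₁, hy₁, y₂, hy₂, hne⟩ := hx
  by_cases hLne : (Lset f x).Nonempty
  · obtain ⟨v₀, hv₀⟩ := hLne
    by_cases hcst : ∀ v ∈ Lset f x, v j = v₀ j
    · exfalso
      have hsub : clarke f x ⊆ {y : Euc d | y j = v₀ j} := by
        rw [clarke_eq_closure]
        exact closure_minimal (convexHull_min hcst (coordSet_convex j (v₀ j)))
          (coordSet_closed j (v₀ j))
      exact hne ((hsub hy₁.1).trans (hsub hy₂.1).symm)
    · push_neg at hcst
      obtain ⟨v₁, hv₁, hv₁j⟩ := hcst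
      exact ⟨v₁, ⟨Lset_subset_subdiff hf x hv₁, Lset_subset_A hA hrange x hv₁⟩,
        v₀, ⟨Lset_subset_subdiff hf x hv₀, Lset_subset_A hA hrange x hv₀⟩, hv₁j⟩
  · exfalso
    have hemp : clarke f x = ∅ := by
      rw [clarke_eq_closure, not_nonempty_iff_eq_empty.1 hLne]
      simp
    rw [hemp] at hy₁
    exact hy₁.1

lemma exists_Lset_pair (hf : ClosedConvexFun f) {x : Euc d}
    (hx : x ∈ interior (effDom f)) {j : Fin d} {y₁ y₂ : Euc d}
    (h₁ : y₁ ∈ subdiff f x) (h₂ : y₂ ∈ subdiff f x) (hlt : y₁ j < y₂ j) :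
    ∃ v₁ ∈ Lset f x, ∃ v₂ ∈ Lset f x, v₁ j ≠ v₂ j := by
  have hsingle : ∀ y : Euc d, ⟪EuclideanSpace.single j (1:ℝ), y⟫ = y j := by
    intro y
    rw [EuclideanSpace.inner_single_left]
    simp
  obtain ⟨v₂, hv₂, hle₂⟩ := key hf hx h₂ (EuclideanSpace.single j (1:ℝ))
  obtain ⟨v₁, hv₁, hle₁⟩ := key hf hx h₁ (-(EuclideanSpace.single j (1:ℝ)))
  rw [hsingle, hsingle] at hle₂
  rw [inner_neg_left, inner_neg_left, hsingle, hsingle, neg_le_neg_iff] at hle₁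
  exact ⟨v₁, hv₁, v₂, hv₂, by intro h; rw [h] at hle₁; linarith⟩

lemma mem_sigma_clarke_and_A (hf : ClosedConvexFun f) {x : Euc d} {j : Fin d}
    {A : Set (Euc d)} (hA : IsClosed A) (hrange : gradRange f ⊆ A)
    (hxD : x ∈ interior (effDom f)) (hx : x ∈ SigmaJ (subdiff f) j Set.univ) :
    x ∈ SigmaJ (clarke f) j Set.univ ∧ x ∈ SigmaJ (subdiff f) j A := by
  obtain ⟨y₁, hy₁, y₂, hy₂, hne⟩ := hx
  have hpair : ∃ v₁ ∈ Lset f x, ∃ v₂ ∈ Lset f x, v₁ j ≠ v₂ j := by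
    rcases lt_or_gt_of_ne hne with h | h
    · exact exists_Lset_pair hf hxD hy₁.1 hy₂.1 h
    · obtain ⟨v₁, hv₁, v₂, hv₂, hvne⟩ := exists_Lset_pair hf hxD hy₂.1 hy₁.1 h
      exact ⟨v₁, hv₁, v₂, hv₂, hvne⟩
  obtain ⟨v₁, hv₁, v₂, hv₂, hvne⟩ := hpair
  constructor
  · exact ⟨v₁, ⟨subset_closure (subset_convexHull ℝ _ hv₁), mem_univ _⟩,
      v₂, ⟨subset_closure (subset_convexHull ℝ _ hv₂), mem_univ _⟩, hvne⟩
  · exact ⟨v₁, ⟨Lset_subset_subdiff hf x hv₁, Lset_subset_A hA hrange x hv₁⟩,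
      v₂, ⟨Lset_subset_subdiff hf x hv₂, Lset_subset_A hA hrange x hv₂⟩, hvne⟩

lemma sigma_A_subset_sigma_univ {Ψ : Euc d → Set (Euc d)} {j : Fin d} {A : Set (Euc d)} :
    SigmaJ Ψ j A ⊆ SigmaJ Ψ j Set.univ := by
  rintro x ⟨y₁, hy₁, y₂, hy₂, hne⟩
  exact ⟨y₁, ⟨hy₁.1, mem_univ _⟩, y₂, ⟨hy₂.1, mem_univ _⟩, hne⟩

end Stmt9Aux

/-- Theorem 2 of the paper, first part. -/
theorem stmt9 {d : ℕ} (f : Euc d → EReal) (hf : ClosedConvexFun f)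
    (hD : (interior (effDom f)).Nonempty) (j : Fin d)
    (A : Set (Euc d)) (hA : IsClosed A) (hrange : gradRange f ⊆ A) :
    SigmaJ (subdiff f) j Set.univ ∩ interior (effDom f) =
      SigmaJ (clarke f) j Set.univ ∩ interior (effDom f) ∧
    SigmaJ (clarke f) j Set.univ ∩ interior (effDom f) =
      SigmaJ (subdiff f) j A ∩ interior (effDom f) ∧
    SigmaJ (clarke f) j Set.univ ⊆ SigmaJ (subdiff f) j A := by
  refine ⟨?_, ?_, fun x hx => mem_sigma_A_of_mem_sigma_clarke hf hA hrange hx⟩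
  · apply Set.Subset.antisymm
    · rintro x ⟨hσ, hD⟩
      exact ⟨(mem_sigma_clarke_and_A hf hA hrange hD hσ).1, hD⟩
    · rintro x ⟨hσ, hD⟩
      exact ⟨sigma_A_subset_sigma_univ (mem_sigma_A_of_mem_sigma_clarke hf hA hrange hσ), hD⟩
  · apply Set.Subset.antisymm
    · rintro x ⟨hσ, hD⟩
      exact ⟨mem_sigma_A_of_mem_sigma_clarke hf hA hrange hσ, hD⟩
    · rintro x ⟨hσ, hD⟩
      exact ⟨(mem_sigma_clarke_and_A hf hA hrange hD
        (sigma_A_subset_sigma_univ hσ)).1, hD⟩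

end
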